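/- arXiv:1305.4704 — 2 statements merged into one kernel-verified Lean document; each statement's English description precedes it below -/
import Mathlib

section
/- Let {(x^t, y^t, z^t)} be generated by the proximal AMA, suppose assumption A1 holds with a triple (x̄, ȳ, z̄), and suppose (i) Σ_g + T + βB*B ≻ 0; (ii) for some μ>0, 2Σ_f − (β+μ)A*A ≻ 0 and γ < 1 + min{β,μ}/(2β). Then the sequence t ↦ (1/(γβ))‖z^t − z̄‖² + ‖y^t − ȳ‖²_T is monotonically nonincreasing (hence bounded), and moreover ‖x^{t+1} − x̄‖ → 0, ‖y^t − ȳ‖_{Σ_g} → 0, ‖B(y^t − ȳ)‖ → 0, ‖y^{t+1} − y^t‖_T → 0, and ‖z^{t+1} − z^t‖ → 0 as t → ∞. -/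
set_option maxHeartbeats 1000000

open RealInnerProductSpace Filter Topology

/-- `v` is a subgradient of the extended-real-valued function `f` at `x`. -/
def IsSubgradAt {E : Type*} [NormedAddCommGroup E] [InnerProductSpace ℝ E]
    (f : E → EReal) (v x : E) : Prop :=
  ∀ u, f x + ((⟪v, u - x⟫ : ℝ) : EReal) ≤ f u

lemma ereal_shift {F G : EReal} {p q : ℝ} (h : F + (p:EReal) ≤ G + (q:EReal)) :
    F + ((p - q : ℝ) : EReal) ≤ G := by
  have h2 : F + (p:EReal) + ((-q : ℝ) : EReal) ≤ G + (q:EReal) + ((-q : ℝ) : EReal) :=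
    add_le_add_left h _
  calc F + ((p-q:ℝ):EReal) = F + (p:EReal) + ((-q:ℝ):EReal) := by
        rw [add_assoc, ← EReal.coe_add, sub_eq_add_neg]
    _ ≤ G + (q:EReal) + ((-q:ℝ):EReal) := h2
    _ = G := by rw [add_assoc, ← EReal.coe_add]; norm_num

lemma coercive_of_pos {E : Type*} [NormedAddCommGroup E] [InnerProductSpace ℝ E]
    [FiniteDimensional ℝ E] (q : E → ℝ) (hcont : Continuous q)
    (hhom : ∀ (c : ℝ) (w : E), q (c • w) = c^2 * q w)
    (hpos : ∀ w : E, w ≠ 0 → 0 < q w) :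
    ∃ δ : ℝ, 0 < δ ∧ ∀ w : E, δ * ‖w‖^2 ≤ q w := by
  have hq0 : q 0 = 0 := by
    have := hhom 0 0; simpa using this
  rcases subsingleton_or_nontrivial E with hE | hE
  · exact ⟨1, one_pos, fun w => by rw [Subsingleton.elim w 0]; simp [hq0]⟩
  · obtain ⟨w0, hw0s, hw0min⟩ :=
      (isCompact_sphere (0:E) 1).exists_isMinOn (NormedSpace.sphere_nonempty.mpr zero_le_one)
        hcont.continuousOn
    have hw0n : ‖w0‖ = 1 := by simpa using hw0s
    have hw0ne : w0 ≠ 0 := by intro h; rw [h] at hw0n; simp at hw0n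
    refine ⟨q w0, hpos w0 hw0ne, fun w => ?_⟩
    rcases eq_or_ne w 0 with rfl | hw
    · simp [hq0]
    · have hn : ‖w‖ ≠ 0 := norm_ne_zero_iff.mpr hw
      have hu : (‖w‖⁻¹ • w) ∈ Metric.sphere (0:E) 1 := by
        simp [norm_smul, abs_of_nonneg (norm_nonneg w), inv_mul_cancel₀ hn]
      have hmin := hw0min hu
      have : q w = ‖w‖^2 * q (‖w‖⁻¹ • w) := by
        rw [hhom]
        rw [show ‖w‖^2 * ((‖w‖⁻¹)^2 * q w) = (‖w‖*‖w‖⁻¹)^2 * q w by ring,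
          mul_inv_cancel₀ hn]; ring
      rw [this, mul_comm]
      have h2 : (0:ℝ) ≤ ‖w‖^2 := sq_nonneg _
      have hmin' : q w0 ≤ q (‖w‖⁻¹ • w) := hmin
      nlinarith [hmin']

lemma subgrad_of_prox {Y Z : Type*}
    [NormedAddCommGroup Y] [InnerProductSpace ℝ Y] [FiniteDimensional ℝ Y]
    [NormedAddCommGroup Z] [InnerProductSpace ℝ Z] [FiniteDimensional ℝ Z]
    (g : Y → EReal)
    (hg_ne_bot : ∀ y, g y ≠ ⊥) (hg_proper : ∃ y, g y ≠ ⊤)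
    (hg_cvx : ∀ (y₁ y₂ : Y) (a b : ℝ), 0 ≤ a → 0 ≤ b → a + b = 1 →
      g (a • y₁ + b • y₂) ≤ (a : EReal) * g y₁ + (b : EReal) * g y₂)
    (B : Y →L[ℝ] Z) (T : Y →L[ℝ] Y)
    (hT_sa : ∀ u v : Y, ⟪T u, v⟫ = ⟪u, T v⟫)
    (hT_psd : ∀ y : Y, 0 ≤ ⟪y, T y⟫)
    (β : ℝ) (hβ : 0 < β) (p c zt : Z) (Y0 Y1 : Y)
    (hmin : ∀ y' : Y,
      g Y1 + ((-⟪zt, B Y1⟫ + β / 2 * ‖p + B Y1 - c‖ ^ 2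
          + 1 / 2 * ⟪Y1 - Y0, T (Y1 - Y0)⟫ : ℝ) : EReal)
        ≤ g y' + ((-⟪zt, B y'⟫ + β / 2 * ‖p + B y' - c‖ ^ 2
          + 1 / 2 * ⟪y' - Y0, T (y' - Y0)⟫ : ℝ) : EReal)) :
    IsSubgradAt g (ContinuousLinearMap.adjoint B zt
      - β • ContinuousLinearMap.adjoint B (p + B Y1 - c) - T (Y1 - Y0)) Y1 := by
  set v : Y := ContinuousLinearMap.adjoint B zt
      - β • ContinuousLinearMap.adjoint B (p + B Y1 - c) - T (Y1 - Y0) with hv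
  have hY1bot : g Y1 ≠ ⊥ := hg_ne_bot Y1
  have hY1top : g Y1 ≠ ⊤ := by
    obtain ⟨y₀, hy₀⟩ := hg_proper
    intro htop
    have h := ereal_shift (hmin y₀)
    rw [htop] at h
    rw [EReal.top_add_coe] at h
    exact hy₀ (top_le_iff.mp h)
  have hG1 : (((g Y1).toReal : ℝ) : EReal) = g Y1 := EReal.coe_toReal hY1top hY1bot
  set G1 : ℝ := (g Y1).toReal
  intro u
  by_cases hgu : g u = ⊤
  · rw [hgu]; exact le_top
  have hGU : (((g u).toReal : ℝ) : EReal) = g u := EReal.coe_toReal hgu (hg_ne_bot u)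
  set GU : ℝ := (g u).toReal
  set w : Y := u - Y1 with hw
  have hQw0 : 0 ≤ β/2*‖B w‖^2 + 1/2*⟪w, T w⟫ := by
    have := hT_psd w
    have h2 : (0:ℝ) ≤ ‖B w‖^2 := sq_nonneg _
    nlinarith
  set Qw : ℝ := β/2*‖B w‖^2 + 1/2*⟪w, T w⟫ with hQw
  have hsym : ⟪Y1 - Y0, T w⟫ = ⟪w, T (Y1 - Y0)⟫ := by
    rw [← hT_sa]; exact real_inner_comm _ _
  have hvw : ⟪v, w⟫ = ⟪zt, B w⟫ - β*⟪p + B Y1 - c, B w⟫ - ⟪w, T (Y1 - Y0)⟫ := by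
    rw [hv]
    rw [inner_sub_left, inner_sub_left, real_inner_smul_left,
      ContinuousLinearMap.adjoint_inner_left, ContinuousLinearMap.adjoint_inner_left,
      real_inner_comm (T (Y1 - Y0)) w]
  have expand : ∀ s : ℝ,
      (-⟪zt, B (Y1 + s•w)⟫ + β/2*‖p + B (Y1 + s•w) - c‖^2
        + 1/2*⟪(Y1 + s•w) - Y0, T ((Y1 + s•w) - Y0)⟫)
      = (-⟪zt, B Y1⟫ + β/2*‖p + B Y1 - c‖^2 + 1/2*⟪Y1 - Y0, T (Y1 - Y0)⟫)
        - s*⟪v,w⟫ + s^2*Qw := by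
    intro s
    have h1 : B (Y1 + s•w) = B Y1 + s • B w := by simp
    have h2 : p + (B Y1 + s • B w) - c = (p + B Y1 - c) + s • B w := by abel
    have h3 : (Y1 + s•w) - Y0 = (Y1 - Y0) + s•w := by abel
    rw [h1, h2, h3, norm_add_sq_real]
    simp only [map_add, map_smul, inner_add_left, inner_add_right, real_inner_smul_left,
      real_inner_smul_right, norm_smul, Real.norm_eq_abs, mul_pow, sq_abs]
    rw [hvw, hQw, hsym]
    ring
  have key : ∀ s : ℝ, 0 < s → s ≤ 1 → G1 + ⟪v, w⟫ ≤ GU + s*Qw := by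
    intro s hs hs1
    have hcvx := hg_cvx Y1 u (1-s) s (by linarith) (le_of_lt hs) (by ring)
    have hus : (1-s) • Y1 + s • u = Y1 + s • w := by
      rw [hw, smul_sub, sub_smul, one_smul]; abel
    rw [hus, ← hG1, ← hGU, ← EReal.coe_mul, ← EReal.coe_mul, ← EReal.coe_add] at hcvx
    have hm := ereal_shift (hmin (Y1 + s • w))
    rw [expand s] at hm
    rw [show (-⟪zt, B Y1⟫ + β/2*‖p + B Y1 - c‖^2 + 1/2*⟪Y1 - Y0, T (Y1 - Y0)⟫
        - ((-⟪zt, B Y1⟫ + β/2*‖p + B Y1 - c‖^2 + 1/2*⟪Y1 - Y0, T (Y1 - Y0)⟫)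
          - s*⟪v,w⟫ + s^2*Qw) : ℝ) = s*⟪v,w⟫ - s^2*Qw from by ring] at hm
    have hchain : g Y1 + ((s*⟪v,w⟫ - s^2*Qw : ℝ) : EReal) ≤ (((1-s)*G1 + s*GU : ℝ) : EReal) :=
      le_trans hm hcvx
    rw [← hG1, ← EReal.coe_add] at hchain
    have hre : G1 + (s*⟪v,w⟫ - s^2*Qw) ≤ (1-s)*G1 + s*GU := EReal.coe_le_coe_iff.mp hchain
    have h5 : s*(G1 + ⟪v,w⟫) ≤ s*(GU + s*Qw) := by nlinarith [hre]
    exact le_of_mul_le_mul_left h5 hs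
  have hfin : G1 + ⟪v, w⟫ ≤ GU := by
    by_contra hcon
    push_neg at hcon
    have hQpos : (0:ℝ) < 2*(Qw + 1) := by linarith
    obtain ⟨s, hs0, hs1, hsQ⟩ : ∃ s : ℝ, 0 < s ∧ s ≤ 1 ∧ s * Qw < G1 + ⟪v,w⟫ - GU := by
      refine ⟨min 1 ((G1 + ⟪v,w⟫ - GU) / (2*(Qw+1))),
        lt_min one_pos (div_pos (by linarith) hQpos), min_le_left _ _, ?_⟩
      have h1 : min 1 ((G1 + ⟪v,w⟫ - GU) / (2*(Qw+1))) * Qw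
          ≤ ((G1 + ⟪v,w⟫ - GU) / (2*(Qw+1))) * Qw :=
        mul_le_mul_of_nonneg_right (min_le_right _ _) hQw0
      have h2 : ((G1 + ⟪v,w⟫ - GU) / (2*(Qw+1))) * Qw < G1 + ⟪v,w⟫ - GU := by
        rw [div_mul_eq_mul_div, div_lt_iff₀ hQpos]
        nlinarith
      linarith
    have hk := key s hs0 hs1
    linarith
  calc g Y1 + ((⟪v, u - Y1⟫ : ℝ) : EReal) = ((G1 + ⟪v, w⟫ : ℝ) : EReal) := by
        rw [← hG1, ← EReal.coe_add, hw]
    _ ≤ ((GU : ℝ) : EReal) := EReal.coe_le_coe_iff.mpr hfin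
    _ = g u := hGU
/-- **Monotonicity and vanishing quantities for the proximal AMA
(from the proof of Theorem 3.1).** Under A1 and conditions (i), (ii), the sequence
`t ↦ (1/(γβ))‖z^t − z̄‖² + ‖y^t − ȳ‖²_T` is nonincreasing, and
`‖x^{t+1} − x̄‖ → 0`, `‖y^t − ȳ‖_{Σg} → 0`, `‖B(y^t − ȳ)‖ → 0`,
`‖y^{t+1} − y^t‖_T → 0`, `‖z^{t+1} − z^t‖ → 0`. -/
theorem stmt_2
    {X Y Z : Type*}
    [NormedAddCommGroup X] [InnerProductSpace ℝ X] [FiniteDimensional ℝ X]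
    [NormedAddCommGroup Y] [InnerProductSpace ℝ Y] [FiniteDimensional ℝ Y]
    [NormedAddCommGroup Z] [InnerProductSpace ℝ Z] [FiniteDimensional ℝ Z]
    (f : X → EReal) (g : Y → EReal)
    -- `f` and `g` are proper
    (hf_ne_bot : ∀ x, f x ≠ ⊥) (hf_proper : ∃ x, f x ≠ ⊤)
    (hg_ne_bot : ∀ y, g y ≠ ⊥) (hg_proper : ∃ y, g y ≠ ⊤)
    -- `f` and `g` are closed
    (hf_lsc : LowerSemicontinuous f) (hg_lsc : LowerSemicontinuous g)
    -- `f` and `g` are convex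
    (hf_cvx : ∀ (x₁ x₂ : X) (a b : ℝ), 0 ≤ a → 0 ≤ b → a + b = 1 →
      f (a • x₁ + b • x₂) ≤ (a : EReal) * f x₁ + (b : EReal) * f x₂)
    (hg_cvx : ∀ (y₁ y₂ : Y) (a b : ℝ), 0 ≤ a → 0 ≤ b → a + b = 1 →
      g (a • y₁ + b • y₂) ≤ (a : EReal) * g y₁ + (b : EReal) * g y₂)
    (A : X →L[ℝ] Z) (B : Y →L[ℝ] Z) (c : Z)
    (Sf : X →L[ℝ] X) (Sg : Y →L[ℝ] Y) (T : Y →L[ℝ] Y)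
    -- `Sf ≻ 0`, `Sg ⪰ 0`, `T ⪰ 0` are self-adjoint
    (hSf_sa : ∀ u v : X, ⟪Sf u, v⟫ = ⟪u, Sf v⟫)
    (hSg_sa : ∀ u v : Y, ⟪Sg u, v⟫ = ⟪u, Sg v⟫)
    (hT_sa : ∀ u v : Y, ⟪T u, v⟫ = ⟪u, T v⟫)
    (hSf_pd : ∀ x : X, x ≠ 0 → 0 < ⟪x, Sf x⟫)
    (hSg_psd : ∀ y : Y, 0 ≤ ⟪y, Sg y⟫)
    (hT_psd : ∀ y : Y, 0 ≤ ⟪y, T y⟫)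
    -- the subdifferential monotonicity conditions on `f` and `g`
    (hf_mono : ∀ (x₁ x₂ u₁ u₂ : X), IsSubgradAt f u₁ x₁ → IsSubgradAt f u₂ x₂ →
      ⟪x₁ - x₂, Sf (x₁ - x₂)⟫ ≤ ⟪u₁ - u₂, x₁ - x₂⟫)
    (hg_mono : ∀ (y₁ y₂ v₁ v₂ : Y), IsSubgradAt g v₁ y₁ → IsSubgradAt g v₂ y₂ →
      ⟪y₁ - y₂, Sg (y₁ - y₂)⟫ ≤ ⟪v₁ - v₂, y₁ - y₂⟫)
    (β γ : ℝ) (hβ : 0 < β) (hγ : 0 < γ)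
    (x : ℕ → X) (y : ℕ → Y) (z : ℕ → Z)
    -- the proximal AMA iterations
    (hx : ∀ (t : ℕ) (x' : X),
      f (x (t+1)) + ((-⟪z t, A (x (t+1))⟫ : ℝ) : EReal)
        ≤ f x' + ((-⟪z t, A x'⟫ : ℝ) : EReal))
    (hy : ∀ (t : ℕ) (y' : Y),
      g (y (t+1)) + ((-⟪z t, B (y (t+1))⟫ + β / 2 * ‖A (x (t+1)) + B (y (t+1)) - c‖ ^ 2
          + 1 / 2 * ⟪y (t+1) - y t, T (y (t+1) - y t)⟫ : ℝ) : EReal)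
        ≤ g y' + ((-⟪z t, B y'⟫ + β / 2 * ‖A (x (t+1)) + B y' - c‖ ^ 2
          + 1 / 2 * ⟪y' - y t, T (y' - y t)⟫ : ℝ) : EReal))
    (hz : ∀ t : ℕ, z (t+1) = z t - (γ * β) • (A (x (t+1)) + B (y (t+1)) - c))
    -- assumption A1 with an explicit triple `(x̄, ȳ, z̄)`
    (xb : X) (yb : Y) (zb : Z)
    (hA1f : IsSubgradAt f (ContinuousLinearMap.adjoint A zb) xb)
    (hA1g : IsSubgradAt g (ContinuousLinearMap.adjoint B zb) yb)
    (hA1c : A xb + B yb - c = 0)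
    -- condition (i): `Σg + T + βB*B ≻ 0`
    (hcond1 : ∀ w : Y, w ≠ 0 → 0 < ⟪w, Sg w⟫ + ⟪w, T w⟫ + β * ‖B w‖ ^ 2)
    -- condition (ii): for some `μ > 0`, `2Σf − (β+μ)A*A ≻ 0` and `γ < 1 + min{β,μ}/(2β)`
    (hcond2 : ∃ μ : ℝ, 0 < μ ∧
      (∀ w : X, w ≠ 0 → 0 < 2 * ⟪w, Sf w⟫ - (β + μ) * ‖A w‖ ^ 2) ∧
      γ < 1 + min β μ / (2 * β)) :
    (∀ t : ℕ,
      1 / (γ * β) * ‖z (t+1) - zb‖ ^ 2 + ⟪y (t+1) - yb, T (y (t+1) - yb)⟫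
        ≤ 1 / (γ * β) * ‖z t - zb‖ ^ 2 + ⟪y t - yb, T (y t - yb)⟫) ∧
    Tendsto (fun t => ‖x (t+1) - xb‖) atTop (𝓝 0) ∧
    Tendsto (fun t => Real.sqrt ⟪y t - yb, Sg (y t - yb)⟫) atTop (𝓝 0) ∧
    Tendsto (fun t => ‖B (y t - yb)‖) atTop (𝓝 0) ∧
    Tendsto (fun t => Real.sqrt ⟪y (t+1) - y t, T (y (t+1) - y t)⟫) atTop (𝓝 0) ∧
    Tendsto (fun t => ‖z (t+1) - z t‖) atTop (𝓝 0) := by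
  obtain ⟨μ, hμ, hSfA, hγ2⟩ := hcond2
  have hgb : 0 < γ * β := mul_pos hγ hβ
  -- subgradient from the x-update
  have hfsub : ∀ t : ℕ, IsSubgradAt f (ContinuousLinearMap.adjoint A (z t)) (x (t+1)) := by
    intro t u
    have h2 := ereal_shift (hx t u)
    rw [show ⟪ContinuousLinearMap.adjoint A (z t), u - x (t+1)⟫
        = -⟪z t, A (x (t+1))⟫ - (-⟪z t, A u⟫) from by
      rw [ContinuousLinearMap.adjoint_inner_left, map_sub, inner_sub_right]; ring]
    exact h2
  -- subgradient from the y-update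
  have hgsub : ∀ t : ℕ, IsSubgradAt g (ContinuousLinearMap.adjoint B (z t)
      - β • ContinuousLinearMap.adjoint B (A (x (t+1)) + B (y (t+1)) - c)
      - T (y (t+1) - y t)) (y (t+1)) :=
    fun t => subgrad_of_prox g hg_ne_bot hg_proper hg_cvx B T hT_sa hT_psd β hβ
      (A (x (t+1))) c (z t) (y t) (y (t+1)) (hy t)
  -- coercivity constant δ₁ from condition (ii)
  obtain ⟨δ₁, hδ₁, hδ₁b⟩ :=
    coercive_of_pos (fun w : X => 2*⟪w, Sf w⟫ - (β+μ)*‖A w‖^2)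
      (by
        have h1 : Continuous fun w : X => ⟪w, Sf w⟫ := continuous_id.inner Sf.continuous
        have h2 : Continuous fun w : X => ‖A w‖^2 := A.continuous.norm.pow 2
        exact (continuous_const.mul h1).sub (continuous_const.mul h2))
      (fun s w => by
        simp only [map_smul, real_inner_smul_left, real_inner_smul_right, norm_smul,
          Real.norm_eq_abs, mul_pow, sq_abs]
        ring)
      hSfA
  -- step-size consequences of condition (ii)
  have h2β : (0:ℝ) < 2*β := by linarith
  have hγlin : 2*γ*β < 2*β + min β μ := by
    have h := mul_lt_mul_of_pos_right hγ2 h2β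
    rw [add_mul, one_mul, div_mul_cancel₀ _ (ne_of_gt h2β)] at h
    linarith
  have hα : 0 < β + μ - γ*β := by
    rcases min_cases β μ with ⟨h1, h2⟩ | ⟨h1, h2⟩ <;> rw [h1] at hγlin <;> nlinarith
  have hq : 0 < (β + μ - γ*β)*(β*(2-γ)) - (β*(1-γ))^2 := by
    have hkey : γ*(β+μ) < β + 2*μ := by
      rcases min_cases β μ with ⟨h1, h2⟩ | ⟨h1, h2⟩ <;> rw [h1] at hγlin
      · nlinarith [mul_pos hβ hμ, sq_nonneg (β - μ)]
      · nlinarith [mul_pos hβ hμ, sq_nonneg (β - μ)]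
    nlinarith [mul_pos hβ hμ]
  obtain ⟨κ, hκpos, hκα⟩ : ∃ κ : ℝ, 0 < κ ∧
      κ * (β + μ - γ*β) = (β + μ - γ*β)*(β*(2-γ)) - (β*(1-γ))^2 :=
    ⟨_, div_pos hq hα, div_mul_cancel₀ _ (ne_of_gt hα)⟩
  -- pointwise quadratic-form bound
  have hQform : ∀ a b : Z,
      κ*‖b‖^2 ≤ (β+μ-γ*β)*‖a‖^2 + 2*(β*(1-γ))*⟪a,b⟫ + (β*(2-γ))*‖b‖^2 := by
    intro a b
    have hexp : ‖(β+μ-γ*β) • a + (β*(1-γ)) • b‖^2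
        = (β+μ-γ*β)^2*‖a‖^2 + 2*((β+μ-γ*β)*(β*(1-γ)))*⟪a,b⟫ + (β*(1-γ))^2*‖b‖^2 := by
      rw [norm_add_sq_real]
      simp only [real_inner_smul_left, real_inner_smul_right, norm_smul, Real.norm_eq_abs,
        mul_pow, sq_abs]
      ring
    have h0 : (0:ℝ) ≤ ‖(β+μ-γ*β) • a + (β*(1-γ)) • b‖^2 := sq_nonneg _
    have hkey : (β+μ-γ*β) * ((β+μ-γ*β)*‖a‖^2 + 2*(β*(1-γ))*⟪a,b⟫ + (β*(2-γ))*‖b‖^2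
        - κ*‖b‖^2) = ‖(β+μ-γ*β) • a + (β*(1-γ)) • b‖^2 := by
      rw [hexp]
      linear_combination (-‖b‖^2 : ℝ) * hκα
    have hkey' : (β+μ-γ*β) * 0 ≤ (β+μ-γ*β) * ((β+μ-γ*β)*‖a‖^2 + 2*(β*(1-γ))*⟪a,b⟫
        + (β*(2-γ))*‖b‖^2 - κ*‖b‖^2) := by rw [mul_zero, hkey]; exact h0
    have hE := le_of_mul_le_mul_left hkey' hα
    linarith
  -- the vector identity for residuals
  have hrab : ∀ t : ℕ, A (x (t+1)) + B (y (t+1)) - c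
      = A (x (t+1) - xb) + B (y (t+1) - yb) := by
    intro t
    calc A (x (t+1)) + B (y (t+1)) - c
        = (A (x (t+1)) - A xb) + (B (y (t+1)) - B yb) + (A xb + B yb - c) := by abel
      _ = A (x (t+1) - xb) + B (y (t+1) - yb) := by
          rw [hA1c, add_zero, map_sub, map_sub]
  -- the per-step descent inequality
  have descent : ∀ t : ℕ,
      (1/(γ*β)*‖z (t+1) - zb‖^2 + ⟪y (t+1) - yb, T (y (t+1) - yb)⟫)
      + (δ₁*‖x (t+1) - xb‖^2 + 2*⟪y (t+1) - yb, Sg (y (t+1) - yb)⟫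
         + ⟪y (t+1) - y t, T (y (t+1) - y t)⟫ + κ*‖B (y (t+1) - yb)‖^2)
      ≤ 1/(γ*β)*‖z t - zb‖^2 + ⟪y t - yb, T (y t - yb)⟫ := by
    intro t
    have e1 : ⟪x (t+1) - xb, Sf (x (t+1) - xb)⟫ ≤ ⟪z t - zb, A (x (t+1) - xb)⟫ := by
      have h := hf_mono (x (t+1)) xb _ _ (hfsub t) hA1f
      rwa [show ⟪ContinuousLinearMap.adjoint A (z t) - ContinuousLinearMap.adjoint A zb,
          x (t+1) - xb⟫ = ⟪z t - zb, A (x (t+1) - xb)⟫ from by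
        rw [← map_sub, ContinuousLinearMap.adjoint_inner_left]] at h
    have e2 : ⟪y (t+1) - yb, Sg (y (t+1) - yb)⟫
        ≤ ⟪z t - zb, B (y (t+1) - yb)⟫
          - β*(⟪A (x (t+1) - xb), B (y (t+1) - yb)⟫ + ‖B (y (t+1) - yb)‖^2)
          - ⟪y (t+1) - yb, T (y (t+1) - y t)⟫ := by
      have h := hg_mono (y (t+1)) yb _ _ (hgsub t) hA1g
      rwa [show ⟪(ContinuousLinearMap.adjoint B (z t)
            - β • ContinuousLinearMap.adjoint B (A (x (t+1)) + B (y (t+1)) - c)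
            - T (y (t+1) - y t)) - ContinuousLinearMap.adjoint B zb, y (t+1) - yb⟫
          = ⟪z t - zb, B (y (t+1) - yb)⟫
            - β*(⟪A (x (t+1) - xb), B (y (t+1) - yb)⟫ + ‖B (y (t+1) - yb)‖^2)
            - ⟪y (t+1) - yb, T (y (t+1) - y t)⟫ from by
        rw [hrab t]
        simp only [inner_sub_left, inner_add_left, real_inner_smul_left,
          ContinuousLinearMap.adjoint_inner_left, real_inner_self_eq_norm_sq]
        rw [real_inner_comm (y (t+1) - yb) (T (y (t+1) - y t))]
        simp only [inner_sub_left]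
        ring] at h
    have hzz : z (t+1) - zb
        = (z t - zb) - (γ*β) • (A (x (t+1) - xb) + B (y (t+1) - yb)) := by
      rw [hz t, hrab t]; abel
    have hZ : ‖z (t+1) - zb‖^2 = ‖z t - zb‖^2
        - 2*(γ*β)*⟪z t - zb, A (x (t+1) - xb) + B (y (t+1) - yb)⟫
        + (γ*β)^2*‖A (x (t+1) - xb) + B (y (t+1) - yb)‖^2 := by
      rw [hzz, norm_sub_sq_real, real_inner_smul_right, norm_smul, Real.norm_eq_abs,
        mul_pow, sq_abs]
      ring
    have hdiv : 1/(γ*β)*‖z (t+1) - zb‖^2 = 1/(γ*β)*‖z t - zb‖^2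
        - 2*⟪z t - zb, A (x (t+1) - xb)⟫ - 2*⟪z t - zb, B (y (t+1) - yb)⟫
        + (γ*β)*‖A (x (t+1) - xb)‖^2
        + 2*(γ*β)*⟪A (x (t+1) - xb), B (y (t+1) - yb)⟫
        + (γ*β)*‖B (y (t+1) - yb)‖^2 := by
      rw [hZ, inner_add_right, norm_add_sq_real]
      field_simp
      ring
    have hTgen : ∀ P d : Y, ⟪P - d, T (P - d)⟫ = ⟪P, T P⟫ - 2*⟪P, T d⟫ + ⟪d, T d⟫ := by
      intro P d
      simp only [map_sub, inner_sub_left, inner_sub_right]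
      rw [← hT_sa d P, real_inner_comm (T d) P]
      ring
    have hTid : ⟪y t - yb, T (y t - yb)⟫ = ⟪y (t+1) - yb, T (y (t+1) - yb)⟫
        - 2*⟪y (t+1) - yb, T (y (t+1) - y t)⟫
        + ⟪y (t+1) - y t, T (y (t+1) - y t)⟫ := by
      rw [show y t - yb = (y (t+1) - yb) - (y (t+1) - y t) from by abel,
        hTgen (y (t+1) - yb) (y (t+1) - y t)]
    have hS2 : (β+μ)*‖A (x (t+1) - xb)‖^2 + δ₁*‖x (t+1) - xb‖^2
        ≤ 2*⟪x (t+1) - xb, Sf (x (t+1) - xb)⟫ := by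
      have := hδ₁b (x (t+1) - xb); linarith
    have hQ := hQform (A (x (t+1) - xb)) (B (y (t+1) - yb))
    linarith [e1, e2, hdiv, hTid, hS2, hQ]
  -- the nonincreasing quantity and the summable error terms
  have hSnn : ∀ t : ℕ, 0 ≤ 1/(γ*β)*‖z t - zb‖^2 + ⟪y t - yb, T (y t - yb)⟫ := by
    intro t
    have h1 : (0:ℝ) ≤ 1/(γ*β)*‖z t - zb‖^2 := by positivity
    have h2 := hT_psd (y t - yb)
    linarith
  set e : ℕ → ℝ := fun t => δ₁*‖x (t+1) - xb‖^2 + 2*⟪y (t+1) - yb, Sg (y (t+1) - yb)⟫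
      + ⟪y (t+1) - y t, T (y (t+1) - y t)⟫ + κ*‖B (y (t+1) - yb)‖^2 with hedef
  set S : ℕ → ℝ := fun t => 1/(γ*β)*‖z t - zb‖^2 + ⟪y t - yb, T (y t - yb)⟫ with hSdef
  have hterm1 : ∀ t : ℕ, 0 ≤ δ₁*‖x (t+1) - xb‖^2 := fun t => by positivity
  have hterm2 : ∀ t : ℕ, 0 ≤ 2*⟪y (t+1) - yb, Sg (y (t+1) - yb)⟫ := fun t => by
    have := hSg_psd (y (t+1) - yb); linarith
  have hterm3 : ∀ t : ℕ, 0 ≤ ⟪y (t+1) - y t, T (y (t+1) - y t)⟫ := fun t => hT_psd _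
  have hterm4 : ∀ t : ℕ, 0 ≤ κ*‖B (y (t+1) - yb)‖^2 := fun t => by positivity
  have he_nn : ∀ t : ℕ, 0 ≤ e t := by
    intro t
    simp only [hedef]
    have := hterm1 t; have := hterm2 t; have := hterm3 t; have := hterm4 t
    linarith
  have hdescent' : ∀ t : ℕ, S (t+1) + e t ≤ S t := by
    intro t
    simp only [hedef, hSdef]
    exact descent t
  have hsum' : ∀ n : ℕ, (∑ t ∈ Finset.range n, e t) + S n ≤ S 0 := by
    intro n
    induction n with
    | zero => simp
    | succ n ih =>
      rw [Finset.sum_range_succ]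
      have := hdescent' n
      linarith
  have hesummable : Summable e :=
    summable_of_sum_range_le (c := S 0) he_nn (fun n => by
      have h1 := hsum' n
      have h2 : 0 ≤ S n := by simp only [hSdef]; exact hSnn n
      linarith)
  have he0 : Tendsto e atTop (𝓝 0) := hesummable.tendsto_atTop_zero
  -- squeeze helper
  have hcomp : ∀ cc : ℝ, 0 < cc → ∀ u : ℕ → ℝ, (∀ t, 0 ≤ u t) → (∀ t, cc * u t ≤ e t) →
      Tendsto u atTop (𝓝 0) := by
    intro cc hcc u hu hue
    have hlim : Tendsto (fun t => (1/cc) * e t) atTop (𝓝 ((1/cc) * 0)) := he0.const_mul (1/cc)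
    rw [mul_zero] at hlim
    refine squeeze_zero hu (fun t => ?_) hlim
    have h := hue t
    calc u t = (1/cc) * (cc * u t) := by field_simp
      _ ≤ (1/cc) * e t := by
          apply mul_le_mul_of_nonneg_left h
          positivity
  -- the individual vanishing quantities
  have hx2 : Tendsto (fun t => ‖x (t+1) - xb‖^2) atTop (𝓝 0) := by
    refine hcomp δ₁ hδ₁ _ (fun t => sq_nonneg _) (fun t => ?_)
    simp only [hedef]
    have := hterm2 t; have := hterm3 t; have := hterm4 t
    linarith
  have hxlim : Tendsto (fun t => ‖x (t+1) - xb‖) atTop (𝓝 0) := by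
    have heq : (fun t => ‖x (t+1) - xb‖) = fun t => Real.sqrt (‖x (t+1) - xb‖^2) :=
      funext fun t => (Real.sqrt_sq (norm_nonneg _)).symm
    rw [heq]
    exact (Real.continuous_sqrt.tendsto' 0 0 Real.sqrt_zero).comp hx2
  have hsg2 : Tendsto (fun t => ⟪y (t+1) - yb, Sg (y (t+1) - yb)⟫) atTop (𝓝 0) := by
    refine hcomp 2 two_pos _ (fun t => hSg_psd _) (fun t => ?_)
    simp only [hedef]
    have := hterm1 t; have := hterm3 t; have := hterm4 t
    linarith
  have hsglim : Tendsto (fun t => Real.sqrt ⟪y t - yb, Sg (y t - yb)⟫) atTop (𝓝 0) := by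
    refine (tendsto_add_atTop_iff_nat 1).mp ?_
    exact (Real.continuous_sqrt.tendsto' 0 0 Real.sqrt_zero).comp hsg2
  have hb2 : Tendsto (fun t => ‖B (y (t+1) - yb)‖^2) atTop (𝓝 0) := by
    refine hcomp κ hκpos _ (fun t => sq_nonneg _) (fun t => ?_)
    simp only [hedef]
    have := hterm1 t; have := hterm2 t; have := hterm3 t
    linarith
  have hb3 : Tendsto (fun t => ‖B (y (t+1) - yb)‖) atTop (𝓝 0) := by
    have heq : (fun t => ‖B (y (t+1) - yb)‖) = fun t => Real.sqrt (‖B (y (t+1) - yb)‖^2) :=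
      funext fun t => (Real.sqrt_sq (norm_nonneg _)).symm
    rw [heq]
    exact (Real.continuous_sqrt.tendsto' 0 0 Real.sqrt_zero).comp hb2
  have hblim : Tendsto (fun t => ‖B (y t - yb)‖) atTop (𝓝 0) :=
    (tendsto_add_atTop_iff_nat 1).mp hb3
  have hd2 : Tendsto (fun t => ⟪y (t+1) - y t, T (y (t+1) - y t)⟫) atTop (𝓝 0) := by
    refine hcomp 1 one_pos _ (fun t => hT_psd _) (fun t => ?_)
    simp only [hedef, one_mul]
    have := hterm1 t; have := hterm2 t; have := hterm4 t
    linarith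
  have hdlim : Tendsto (fun t => Real.sqrt ⟪y (t+1) - y t, T (y (t+1) - y t)⟫) atTop (𝓝 0) :=
    (Real.continuous_sqrt.tendsto' 0 0 Real.sqrt_zero).comp hd2
  have hz5 : ∀ t : ℕ, ‖z (t+1) - z t‖
      ≤ γ*β*(‖A‖*‖x (t+1) - xb‖ + ‖B (y (t+1) - yb)‖) := by
    intro t
    have h1 : z (t+1) - z t = -((γ*β) • (A (x (t+1) - xb) + B (y (t+1) - yb))) := by
      rw [hz t, hrab t]; abel
    rw [h1, norm_neg, norm_smul, Real.norm_eq_abs, abs_of_pos hgb]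
    have h2 : ‖A (x (t+1) - xb) + B (y (t+1) - yb)‖
        ≤ ‖A‖*‖x (t+1) - xb‖ + ‖B (y (t+1) - yb)‖ := by
      have h3 := norm_add_le (A (x (t+1) - xb)) (B (y (t+1) - yb))
      have h4 := A.le_opNorm (x (t+1) - xb)
      linarith
    exact mul_le_mul_of_nonneg_left h2 hgb.le
  have hzrhs : Tendsto (fun t => γ*β*(‖A‖*‖x (t+1) - xb‖ + ‖B (y (t+1) - yb)‖))
      atTop (𝓝 0) := by
    have := (((hxlim.const_mul ‖A‖).add hb3).const_mul (γ*β))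
    simpa using this
  have hzlim : Tendsto (fun t => ‖z (t+1) - z t‖) atTop (𝓝 0) :=
    squeeze_zero (fun t => norm_nonneg _) hz5 hzrhs
  refine ⟨fun t => ?_, hxlim, hsglim, hblim, hdlim, hzlim⟩
  have h1 := descent t
  have := hterm1 t; have := hterm2 t; have := hterm3 t; have := hterm4 t
  linarith
end

section
/- Let {(x^t, y^t, z^t)} be generated by the proximal AMA, suppose assumption A1 holds, and suppose β>0, T ⪰ 0 and γ>0 are chosen so that (i) Σ_g + T + βB*B ≻ 0 and (ii) for some positive μ, δ, σ one has 2Σ_f − (β+μ)A*A ⪰ δI and γ + σ ≤ 1 + min{β,μ}/(2β). Let (x̄, ȳ, z̄) be the limit of {(x^t, y^t, z^t)} and define (x̄^N, ȳ^N) = (1/N)Σ_{t=1}^N (x^t, y^t). Then ‖A x̄^N + B ȳ^N − c‖ ≤ (1/√(Nσβ)) · √((1/(γβ))‖z⁰ − z̄‖² + ‖y⁰ − ȳ‖²_T). -/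
open RealInnerProductSpace Filter Topology

private lemma ereal_shift_s3 {a b : EReal} {r s : ℝ} (h : a + (r:EReal) ≤ b + (s:EReal)) :
    a + ((r - s : ℝ):EReal) ≤ b := by
  induction a using EReal.rec with
  | bot => simp
  | top =>
    simp only [EReal.top_add_coe] at h ⊢
    induction b using EReal.rec with
    | bot => simp at h
    | top => simp
    | coe b =>
      rw [← EReal.coe_add] at h
      exact absurd (top_le_iff.mp h) (EReal.coe_ne_top _)
  | coe a =>
    induction b using EReal.rec with
    | bot => simp at h
    | top => simp
    | coe b =>
      norm_cast at h ⊢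
      linarith

private lemma T_identity {Y : Type*} [NormedAddCommGroup Y] [InnerProductSpace ℝ Y]
    (T : Y →L[ℝ] Y) (hT_sa : ∀ u v : Y, ⟪T u, v⟫ = ⟪u, T v⟫) (dy aa w : Y)
    (hw : w = dy - aa) :
    2*⟪T aa, dy⟫ = ⟪dy, T dy⟫ + ⟪aa, T aa⟫ - ⟪w, T w⟫ := by
  subst hw
  rw [map_sub]
  simp only [inner_sub_left, inner_sub_right]
  have c1 : ⟪aa, T dy⟫ = ⟪T aa, dy⟫ := (hT_sa aa dy).symm
  have c2 : ⟪dy, T aa⟫ = ⟪T aa, dy⟫ := (real_inner_comm dy (T aa)).symm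
  rw [c1, c2]; ring

private lemma norm_expand {Z : Type*} [NormedAddCommGroup Z] [InnerProductSpace ℝ Z]
    (u w : Z) (κ : ℝ) :
    ‖u - κ • w‖^2 = ‖u‖^2 - 2*(κ*⟪u, w⟫) + κ^2*‖w‖^2 := by
  rw [norm_sub_sq_real, real_inner_smul_right, norm_smul]
  simp only [Real.norm_eq_abs, mul_pow, sq_abs]
  try ring

private lemma young_ineq {Z : Type*} [NormedAddCommGroup Z] [InnerProductSpace ℝ Z]
    (u w : Z) (β μ ν : ℝ) (hβμ : 0 < β + μ) (hβν : β*(1-ν)*(β+μ) = β^2) :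
    2*β*⟪u, w⟫ ≤ β*(1-ν)*‖u‖^2 + (β+μ)*‖w‖^2 := by
  have hq : (0:ℝ) ≤ ‖β • u - (β+μ) • w‖^2 := sq_nonneg _
  rw [norm_sub_sq_real, real_inner_smul_left, real_inner_smul_right,
    norm_smul, norm_smul] at hq
  simp only [Real.norm_eq_abs, mul_pow, sq_abs] at hq
  have hβν' := congrArg (· * ‖u‖^2) hβν
  have h0 : 2*β*⟪u, w⟫*(β+μ) ≤ (β*(1-ν)*‖u‖^2 + (β+μ)*‖w‖^2)*(β+μ) := by
    nlinarith [hq, hβν']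
  exact le_of_mul_le_mul_right h0 hβμ

private lemma inner_self_sub {Z : Type*} [NormedAddCommGroup Z] [InnerProductSpace ℝ Z]
    (u w v : Z) (hw : w = u - v) :
    ⟪u, w⟫ = ‖u‖^2 - ⟪u, v⟫ := by
  subst hw
  rw [inner_sub_right, real_inner_self_eq_norm_sq]

private lemma final_step (P Q R Sfv Sgv TAdy Tt Tdy Taa ndx nAdx IA γ β σ μ ν δ : ℝ)
    (hβ : 0 < β)
    (e1 : Sfv ≤ P)
    (e2 : Sgv ≤ Q - β * (R - IA) - TAdy)
    (hT1 : 2*TAdy = Tdy + Taa - Tt)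
    (hSg : 0 ≤ Sgv) (hTaa : 0 ≤ Taa)
    (hc2 : δ*ndx ≤ 2*Sfv - (β+μ)*nAdx)
    (hyoung : 2*β*IA ≤ β*(1-ν)*R + (β+μ)*nAdx)
    (hR : 0 ≤ R) (hδn : 0 ≤ δ*ndx) (hcoef : 0 ≤ 1 + ν - γ - σ) :
    σ*β*R ≤ 2*(P + Q) - (γ*β)*R + Tt - Tdy := by
  nlinarith [mul_nonneg (mul_nonneg hβ.le hR) hcoef]

private lemma x_subgrad {X Z : Type*}
    [NormedAddCommGroup X] [InnerProductSpace ℝ X] [FiniteDimensional ℝ X]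
    [NormedAddCommGroup Z] [InnerProductSpace ℝ Z] [FiniteDimensional ℝ Z]
    (f : X → EReal) (A : X →L[ℝ] Z) (zt : Z) (xp : X)
    (hmin : ∀ x' : X, f xp + ((-⟪zt, A xp⟫ : ℝ) : EReal) ≤ f x' + ((-⟪zt, A x'⟫ : ℝ) : EReal)) :
    IsSubgradAt f ((ContinuousLinearMap.adjoint A) zt) xp := by
  intro u
  have h := ereal_shift_s3 (hmin u)
  have hvd : ⟪(ContinuousLinearMap.adjoint A) zt, u - xp⟫ = -⟪zt, A xp⟫ - -⟪zt, A u⟫ := by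
    rw [ContinuousLinearMap.adjoint_inner_left, map_sub, inner_sub_right]; ring
  rwa [hvd]

private lemma y_subgrad {Y Z : Type*}
    [NormedAddCommGroup Y] [InnerProductSpace ℝ Y] [FiniteDimensional ℝ Y]
    [NormedAddCommGroup Z] [InnerProductSpace ℝ Z] [FiniteDimensional ℝ Z]
    (g : Y → EReal)
    (hg_ne_bot : ∀ y, g y ≠ ⊥)
    (hg_cvx : ∀ (y₁ y₂ : Y) (a b : ℝ), 0 ≤ a → 0 ≤ b → a + b = 1 →
      g (a • y₁ + b • y₂) ≤ (a : EReal) * g y₁ + (b : EReal) * g y₂)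
    (B : Y →L[ℝ] Z) (T : Y →L[ℝ] Y)
    (hT_sa : ∀ u v : Y, ⟪T u, v⟫ = ⟪u, T v⟫)
    (β : ℝ) (hβ : 0 ≤ β) (hT_psd : ∀ y : Y, 0 ≤ ⟪y, T y⟫)
    (zt w c : Z) (yt yp : Y)
    (hmin : ∀ y' : Y,
      g yp + ((-⟪zt, B yp⟫ + β / 2 * ‖w + B yp - c‖ ^ 2
          + 1 / 2 * ⟪yp - yt, T (yp - yt)⟫ : ℝ) : EReal)
        ≤ g y' + ((-⟪zt, B y'⟫ + β / 2 * ‖w + B y' - c‖ ^ 2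
          + 1 / 2 * ⟪y' - yt, T (y' - yt)⟫ : ℝ) : EReal)) :
    IsSubgradAt g ((ContinuousLinearMap.adjoint B) zt
      - β • (ContinuousLinearMap.adjoint B) (w + B yp - c) - T (yp - yt)) yp := by
  intro u
  rcases eq_or_ne (g u) ⊤ with hu | hu
  · rw [hu]; exact le_top
  obtain ⟨G, hG⟩ : ∃ r : ℝ, g u = (r:EReal) :=
    ⟨(g u).toReal, (EReal.coe_toReal hu (hg_ne_bot u)).symm⟩
  have hyp_ne_top : g yp ≠ ⊤ := by
    intro htop
    have h1 := ereal_shift_s3 (hmin u)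
    rw [htop, hG, EReal.top_add_coe] at h1
    exact EReal.coe_ne_top _ (top_le_iff.mp h1)
  obtain ⟨Gp, hGp⟩ : ∃ r : ℝ, g yp = (r:EReal) :=
    ⟨(g yp).toReal, (EReal.coe_toReal hyp_ne_top (hg_ne_bot yp)).symm⟩
  set d := u - yp with hd
  set ρ := w + B yp - c with hρ
  set a := yp - yt with ha
  set L : ℝ := -⟪zt, B d⟫ + β * ⟪ρ, B d⟫ + ⟪T a, d⟫ with hL
  set H : ℝ := β * ‖B d‖^2 + ⟪d, T d⟫ with hH
  have hHnn : 0 ≤ H := add_nonneg (mul_nonneg hβ (sq_nonneg _)) (hT_psd d)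
  have key : ∀ s : ℝ, 0 < s → s ≤ 1 → Gp - G - L ≤ s / 2 * H := by
    intro s hs hs1
    have hys : yp + s • d = (1 - s) • yp + s • u := by rw [hd]; module
    have hcvx := hg_cvx yp u (1 - s) s (by linarith) (le_of_lt hs) (by ring)
    rw [← hys, hGp, hG] at hcvx
    have hcvx' : g (yp + s • d) ≤ (((1-s) * Gp + s * G : ℝ) : EReal) := by
      exact_mod_cast hcvx
    have hmins := (hmin (yp + s • d)).trans (add_le_add hcvx' le_rfl)
    rw [hGp] at hmins
    have id1 : ⟪zt, B (yp + s • d)⟫ = ⟪zt, B yp⟫ + s * ⟪zt, B d⟫ := by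
      simp [map_add, map_smul, inner_add_right, real_inner_smul_right]
    have e2 : w + B (yp + s • d) - c = ρ + s • (B d) := by
      rw [hρ, map_add, map_smul]; abel
    have id2 : ‖w + B (yp + s • d) - c‖^2 = ‖ρ‖^2 + 2 * (s * ⟪ρ, B d⟫) + s^2 * ‖B d‖^2 := by
      rw [e2, norm_add_sq_real, real_inner_smul_right, norm_smul]
      simp [mul_pow, sq_abs]
      try ring
    have e3 : yp + s • d - yt = a + s • d := by rw [ha]; abel
    have id3 : ⟪yp + s • d - yt, T (yp + s • d - yt)⟫
        = ⟪a, T a⟫ + 2 * (s * ⟪T a, d⟫) + s^2 * ⟪d, T d⟫ := by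
      rw [e3, map_add, map_smul]
      simp only [inner_add_left, inner_add_right, real_inner_smul_left, real_inner_smul_right]
      have c1 : ⟪a, T d⟫ = ⟪T a, d⟫ := (hT_sa a d).symm
      have c2 : ⟪d, T a⟫ = ⟪T a, d⟫ := (real_inner_comm d (T a)).symm
      rw [c1, c2]; ring
    rw [id1, id2, id3] at hmins
    have hreal : Gp + (-⟪zt, B yp⟫ + β / 2 * ‖ρ‖ ^ 2 + 1 / 2 * ⟪a, T a⟫)
        ≤ ((1-s) * Gp + s * G) + (-(⟪zt, B yp⟫ + s * ⟪zt, B d⟫)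
          + β / 2 * (‖ρ‖^2 + 2 * (s * ⟪ρ, B d⟫) + s^2 * ‖B d‖^2)
          + 1 / 2 * (⟪a, T a⟫ + 2 * (s * ⟪T a, d⟫) + s^2 * ⟪d, T d⟫)) := by
      exact_mod_cast hmins
    have hmul : s * (Gp - G - L) ≤ s * (s / 2 * H) := by
      rw [hL, hH]; nlinarith [hreal]
    exact le_of_mul_le_mul_left hmul hs
  have hfin : Gp - G - L ≤ 0 := by
    by_contra hpos
    push_neg at hpos
    set ε := Gp - G - L
    have hs1 : (0:ℝ) < min 1 (ε/(H+1)) := lt_min one_pos (div_pos hpos (by linarith))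
    have hk := key _ hs1 (min_le_left _ _)
    have hs2 : min 1 (ε/(H+1)) ≤ ε/(H+1) := min_le_right _ _
    have hs3 : min 1 (ε/(H+1)) * (H+1) ≤ ε := by
      rw [← le_div_iff₀ (by linarith : (0:ℝ) < H+1)]; exact hs2
    nlinarith [mul_nonneg hs1.le hHnn]
  have hvd : ⟪(ContinuousLinearMap.adjoint B) zt
      - β • (ContinuousLinearMap.adjoint B) ρ - T a, d⟫ = -L := by
    simp only [inner_sub_left, real_inner_smul_left, ContinuousLinearMap.adjoint_inner_left, hL]
    ring
  rw [hGp, hG, hvd]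
  exact_mod_cast (by linarith : Gp + (-L) ≤ G)

set_option maxHeartbeats 1000000 in
/-- **Iteration complexity of the proximal AMA: feasibility bound (Theorem 3.2,
inequality (constraintbd)).** For the ergodic averages
`(x̄^N, ȳ^N) = (1/N)Σ_{t=1}^N (x^t, y^t)` one has
`‖A x̄^N + B ȳ^N − c‖ ≤ (1/√(Nσβ))·√((1/(γβ))‖z⁰ − z̄‖² + ‖y⁰ − ȳ‖²_T)`. -/
theorem stmt_3
    {X Y Z : Type*}
    [NormedAddCommGroup X] [InnerProductSpace ℝ X] [FiniteDimensional ℝ X]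
    [NormedAddCommGroup Y] [InnerProductSpace ℝ Y] [FiniteDimensional ℝ Y]
    [NormedAddCommGroup Z] [InnerProductSpace ℝ Z] [FiniteDimensional ℝ Z]
    (f : X → EReal) (g : Y → EReal)
    -- `f` and `g` are proper
    (hf_ne_bot : ∀ x, f x ≠ ⊥) (hf_proper : ∃ x, f x ≠ ⊤)
    (hg_ne_bot : ∀ y, g y ≠ ⊥) (hg_proper : ∃ y, g y ≠ ⊤)
    -- `f` and `g` are closed
    (hf_lsc : LowerSemicontinuous f) (hg_lsc : LowerSemicontinuous g)
    -- `f` and `g` are convex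
    (hf_cvx : ∀ (x₁ x₂ : X) (a b : ℝ), 0 ≤ a → 0 ≤ b → a + b = 1 →
      f (a • x₁ + b • x₂) ≤ (a : EReal) * f x₁ + (b : EReal) * f x₂)
    (hg_cvx : ∀ (y₁ y₂ : Y) (a b : ℝ), 0 ≤ a → 0 ≤ b → a + b = 1 →
      g (a • y₁ + b • y₂) ≤ (a : EReal) * g y₁ + (b : EReal) * g y₂)
    (A : X →L[ℝ] Z) (B : Y →L[ℝ] Z) (c : Z)
    (Sf : X →L[ℝ] X) (Sg : Y →L[ℝ] Y) (T : Y →L[ℝ] Y)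
    -- `Sf ≻ 0`, `Sg ⪰ 0`, `T ⪰ 0` are self-adjoint
    (hSf_sa : ∀ u v : X, ⟪Sf u, v⟫ = ⟪u, Sf v⟫)
    (hSg_sa : ∀ u v : Y, ⟪Sg u, v⟫ = ⟪u, Sg v⟫)
    (hT_sa : ∀ u v : Y, ⟪T u, v⟫ = ⟪u, T v⟫)
    (hSf_pd : ∀ x : X, x ≠ 0 → 0 < ⟪x, Sf x⟫)
    (hSg_psd : ∀ y : Y, 0 ≤ ⟪y, Sg y⟫)
    (hT_psd : ∀ y : Y, 0 ≤ ⟪y, T y⟫)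
    -- the subdifferential monotonicity conditions on `f` and `g`
    (hf_mono : ∀ (x₁ x₂ u₁ u₂ : X), IsSubgradAt f u₁ x₁ → IsSubgradAt f u₂ x₂ →
      ⟪x₁ - x₂, Sf (x₁ - x₂)⟫ ≤ ⟪u₁ - u₂, x₁ - x₂⟫)
    (hg_mono : ∀ (y₁ y₂ v₁ v₂ : Y), IsSubgradAt g v₁ y₁ → IsSubgradAt g v₂ y₂ →
      ⟪y₁ - y₂, Sg (y₁ - y₂)⟫ ≤ ⟪v₁ - v₂, y₁ - y₂⟫)
    (β γ : ℝ) (hβ : 0 < β) (hγ : 0 < γ)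
    (x : ℕ → X) (y : ℕ → Y) (z : ℕ → Z)
    -- the proximal AMA iterations
    (hx : ∀ (t : ℕ) (x' : X),
      f (x (t+1)) + ((-⟪z t, A (x (t+1))⟫ : ℝ) : EReal)
        ≤ f x' + ((-⟪z t, A x'⟫ : ℝ) : EReal))
    (hy : ∀ (t : ℕ) (y' : Y),
      g (y (t+1)) + ((-⟪z t, B (y (t+1))⟫ + β / 2 * ‖A (x (t+1)) + B (y (t+1)) - c‖ ^ 2
          + 1 / 2 * ⟪y (t+1) - y t, T (y (t+1) - y t)⟫ : ℝ) : EReal)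
        ≤ g y' + ((-⟪z t, B y'⟫ + β / 2 * ‖A (x (t+1)) + B y' - c‖ ^ 2
          + 1 / 2 * ⟪y' - y t, T (y' - y t)⟫ : ℝ) : EReal))
    (hz : ∀ t : ℕ, z (t+1) = z t - (γ * β) • (A (x (t+1)) + B (y (t+1)) - c))
    -- assumption A1
    (hA1 : ∃ (x1 : X) (y1 : Y) (z1 : Z),
      IsSubgradAt f (ContinuousLinearMap.adjoint A z1) x1 ∧
      IsSubgradAt g (ContinuousLinearMap.adjoint B z1) y1 ∧
      A x1 + B y1 - c = 0)
    -- condition (i): `Σg + T + βB*B ≻ 0`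
    (hcond1 : ∀ w : Y, w ≠ 0 → 0 < ⟪w, Sg w⟫ + ⟪w, T w⟫ + β * ‖B w‖ ^ 2)
    (μ δ σ : ℝ) (hμ : 0 < μ) (hδ : 0 < δ) (hσ : 0 < σ)
    -- condition (ii): `2Σf − (β+μ)A*A ⪰ δI` and `γ + σ ≤ 1 + min{β,μ}/(2β)`
    (hcond2 : ∀ w : X, δ * ‖w‖ ^ 2 ≤ 2 * ⟪w, Sf w⟫ - (β + μ) * ‖A w‖ ^ 2)
    (hcond3 : γ + σ ≤ 1 + min β μ / (2 * β))
    -- `(x̄, ȳ, z̄)` is the limit of the iterates guaranteed by the convergence theorem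
    (xb : X) (yb : Y) (zb : Z)
    (hlimx : Tendsto x atTop (𝓝 xb)) (hlimy : Tendsto y atTop (𝓝 yb))
    (hlimz : Tendsto z atTop (𝓝 zb))
    (hA1f : IsSubgradAt f (ContinuousLinearMap.adjoint A zb) xb)
    (hA1g : IsSubgradAt g (ContinuousLinearMap.adjoint B zb) yb)
    (hA1c : A xb + B yb - c = 0) :
    ∀ N : ℕ, 1 ≤ N →
      ‖A ((N : ℝ)⁻¹ • ∑ t ∈ Finset.Icc 1 N, x t)
          + B ((N : ℝ)⁻¹ • ∑ t ∈ Finset.Icc 1 N, y t) - c‖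
        ≤ 1 / Real.sqrt (N * σ * β) *
          Real.sqrt (1 / (γ * β) * ‖z 0 - zb‖ ^ 2 + ⟪y 0 - yb, T (y 0 - yb)⟫) := by
  have hβμ : (0:ℝ) < β + μ := by linarith
  have hγβ : (0:ℝ) < γ * β := mul_pos hγ hβ
  set ν : ℝ := μ / (β + μ) with hν
  have hν1 : ν * (β + μ) = μ := div_mul_cancel₀ _ (ne_of_gt hβμ)
  have hσν : σ + γ ≤ 1 + ν := by
    have h1 : min β μ / (2*β) ≤ ν := by
      rw [hν, div_le_div_iff₀ (by linarith) hβμ]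
      rcases le_total β μ with h | h
      · rw [min_eq_left h]; nlinarith
      · rw [min_eq_right h]; nlinarith
    linarith
  set r : ℕ → Z := fun t => A (x (t+1)) + B (y (t+1)) - c with hrdef
  set Φ : ℕ → ℝ := fun t => 1 / (γ * β) * ‖z t - zb‖ ^ 2 + ⟪y t - yb, T (y t - yb)⟫ with hΦdef
  have hΦnn : ∀ t, 0 ≤ Φ t := fun t =>
    add_nonneg (mul_nonneg (by positivity) (sq_nonneg _)) (hT_psd _)
  have hfx : ∀ t, IsSubgradAt f ((ContinuousLinearMap.adjoint A) (z t)) (x (t+1)) :=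
    fun t => x_subgrad f A (z t) (x (t+1)) (hx t)
  have hgy : ∀ t, IsSubgradAt g ((ContinuousLinearMap.adjoint B) (z t)
      - β • (ContinuousLinearMap.adjoint B) (A (x (t+1)) + B (y (t+1)) - c)
      - T (y (t+1) - y t)) (y (t+1)) :=
    fun t => y_subgrad g hg_ne_bot hg_cvx B T hT_sa β hβ.le hT_psd
      (z t) (A (x (t+1))) c (y t) (y (t+1)) (hy t)
  have step : ∀ t : ℕ, σ * β * ‖r t‖^2 ≤ Φ t - Φ (t+1) := by
    intro t
    set dx := x (t+1) - xb with hdx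
    set dy := y (t+1) - yb with hdy
    set aa := y (t+1) - y t with hadef
    have e1 : ⟪dx, Sf dx⟫ ≤ ⟪z t - zb, A dx⟫ := by
      have h := hf_mono (x (t+1)) xb _ _ (hfx t) hA1f
      rwa [← map_sub, ContinuousLinearMap.adjoint_inner_left] at h
    have e2 : ⟪dy, Sg dy⟫ ≤ ⟪z t - zb, B dy⟫ - β * ⟪r t, B dy⟫ - ⟪T aa, dy⟫ := by
      have h := hg_mono (y (t+1)) yb _ _ (hgy t) hA1g
      have hexp : ⟪(ContinuousLinearMap.adjoint B) (z t)
          - β • (ContinuousLinearMap.adjoint B) (A (x (t+1)) + B (y (t+1)) - c)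
          - T (y (t+1) - y t) - (ContinuousLinearMap.adjoint B) zb, y (t+1) - yb⟫
          = ⟪z t - zb, B dy⟫ - β * ⟪r t, B dy⟫ - ⟪T aa, dy⟫ := by
      -- fill
        simp only [inner_sub_left, real_inner_smul_left,
          ContinuousLinearMap.adjoint_inner_left, hrdef, hdy, hadef]
        ring
      rwa [hexp] at h
    have hrd : r t = A dx + B dy := by
      have h1 : r t = (A (x (t+1)) + B (y (t+1)) - c) - (A xb + B yb - c) := by
        rw [hA1c, hrdef]; simp
      rw [h1, hdx, hdy, map_sub, map_sub]; abel
    have hz1 : ‖z (t+1) - zb‖^2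
        = ‖z t - zb‖^2 - 2*((γ*β)*⟪z t - zb, r t⟫) + (γ*β)^2*‖r t‖^2 := by
      have h2 : z (t+1) - zb = (z t - zb) - (γ*β) • (r t) := by
        rw [hz t, hrdef]; abel
      rw [h2]; exact norm_expand _ _ _
    have hT1 : 2*⟪T aa, dy⟫ = ⟪dy, T dy⟫ + ⟪aa, T aa⟫ - ⟪y t - yb, T (y t - yb)⟫ := by
      exact T_identity T hT_sa dy aa _ (by rw [hdy, hadef]; abel)
    have hPQ : ⟪z t - zb, r t⟫ = ⟪z t - zb, A dx⟫ + ⟪z t - zb, B dy⟫ := by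
      rw [hrd, inner_add_right]
    have hBdy : ⟪r t, B dy⟫ = ‖r t‖^2 - ⟪r t, A dx⟫ := by
      exact inner_self_sub (r t) (B dy) (A dx) (by rw [hrd]; abel)
    have hcond2' := hcond2 dx
    have hβν : β*(1-ν)*(β+μ) = β^2 := by
      rw [hν]; field_simp; ring
    have hyoung : 2*β*⟪r t, A dx⟫ ≤ β*(1-ν)*‖r t‖^2 + (β+μ)*‖A dx‖^2 :=
      young_ineq (r t) (A dx) β μ ν hβμ hβν
    have hdiv : Φ t - Φ (t+1) = 2*(⟪z t - zb, A dx⟫ + ⟪z t - zb, B dy⟫) - (γ*β)*‖r t‖^2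
        + ⟪y t - yb, T (y t - yb)⟫ - ⟪dy, T dy⟫ := by
      simp only [hΦdef]
      rw [hz1, hPQ, hdy]
      field_simp
      ring
    rw [hBdy] at e2
    rw [hdiv]
    exact final_step _ _ _ _ _ _ _ _ _ _ _ _ γ β σ μ ν δ hβ e1 e2 hT1
      (hSg_psd dy) (hT_psd aa) hcond2' hyoung (sq_nonneg _)
      (mul_nonneg hδ.le (sq_nonneg _)) (by linarith)
  intro N hN
  have hNpos : (0:ℝ) < N := by exact_mod_cast Nat.lt_of_lt_of_le Nat.zero_lt_one hN
  set v : ℕ → Z := fun s => A (x s) + B (y s) - c with hvdef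
  have hre : ∑ t ∈ Finset.range N, ‖r t‖^2 = ∑ s ∈ Finset.Icc 1 N, ‖v s‖^2 := by
    rw [← Finset.Ico_add_one_right_eq_Icc, Finset.sum_Ico_eq_sum_range]
    simp [hrdef, hvdef, Nat.add_sub_cancel, add_comm]
  have hsum1 : σ*β*(∑ s ∈ Finset.Icc 1 N, ‖v s‖^2) ≤ Φ 0 := by
    have h1 : ∑ t ∈ Finset.range N, (σ*β*‖r t‖^2) ≤ ∑ t ∈ Finset.range N, (Φ t - Φ (t+1)) :=
      Finset.sum_le_sum (fun t _ => step t)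
    rw [Finset.sum_range_sub' Φ N, ← Finset.mul_sum, hre] at h1
    have h2 := hΦnn N
    linarith
  set S : Z := ∑ s ∈ Finset.Icc 1 N, v s with hSdef
  have hvsumnn : (0:ℝ) ≤ ∑ s ∈ Finset.Icc 1 N, ‖v s‖^2 :=
    Finset.sum_nonneg (fun s _ => sq_nonneg _)
  have hS2 : ‖S‖^2 ≤ N * ∑ s ∈ Finset.Icc 1 N, ‖v s‖^2 := by
    have h1 : ‖S‖ ≤ ∑ s ∈ Finset.Icc 1 N, ‖v s‖ := norm_sum_le _ _
    have h2 := Finset.sum_mul_sq_le_sq_mul_sq (Finset.Icc 1 N) (fun _ => (1:ℝ)) (fun s => ‖v s‖)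
    simp only [one_pow, one_mul, Finset.sum_const, Nat.card_Icc, Nat.add_sub_cancel,
      nsmul_eq_mul, mul_one] at h2
    have h3 : (0:ℝ) ≤ ∑ s ∈ Finset.Icc 1 N, ‖v s‖ :=
      Finset.sum_nonneg (fun s _ => norm_nonneg _)
    nlinarith [norm_nonneg S]
  have hgoal_eq : A ((N : ℝ)⁻¹ • ∑ t ∈ Finset.Icc 1 N, x t)
      + B ((N : ℝ)⁻¹ • ∑ t ∈ Finset.Icc 1 N, y t) - c = (N:ℝ)⁻¹ • S := by
    have hc : ∑ s ∈ Finset.Icc 1 N, v s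
        = (∑ s ∈ Finset.Icc 1 N, A (x s)) + (∑ s ∈ Finset.Icc 1 N, B (y s)) - (N:ℝ) • c := by
      rw [hvdef]
      rw [Finset.sum_sub_distrib, Finset.sum_add_distrib, Finset.sum_const, Nat.card_Icc,
        Nat.add_sub_cancel]
      congr 1
      exact (Nat.cast_smul_eq_nsmul ℝ N c).symm
    rw [hSdef, hc, map_smul, map_smul, map_sum, map_sum, smul_sub, smul_add, smul_smul,
      inv_mul_cancel₀ (ne_of_gt hNpos), one_smul]
  rw [hgoal_eq]
  have hNσβ : (0:ℝ) < (N:ℝ)*σ*β := by positivity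
  have hsq : ‖(N:ℝ)⁻¹ • S‖^2 ≤ (Φ 0) / ((N:ℝ)*σ*β) := by
    rw [norm_smul, mul_pow, Real.norm_eq_abs, sq_abs, le_div_iff₀ hNσβ]
    have hkey : σ*β*‖S‖^2 ≤ σ*β*((N:ℝ) * ∑ s ∈ Finset.Icc 1 N, ‖v s‖^2) :=
      mul_le_mul_of_nonneg_left hS2 (by positivity)
    have hNN : ((N:ℝ)⁻¹)^2*(N:ℝ) = (N:ℝ)⁻¹ := by
      rw [sq]
      field_simp
    have hN1 : (N:ℝ)*(N:ℝ)⁻¹ = 1 := mul_inv_cancel₀ (ne_of_gt hNpos)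
    calc ((N:ℝ)⁻¹)^2*‖S‖^2*((N:ℝ)*σ*β) = (σ*β*‖S‖^2) * (N:ℝ)⁻¹ := by
          linear_combination σ*β*‖S‖^2 * hNN
    _ ≤ (σ*β*((N:ℝ) * ∑ s ∈ Finset.Icc 1 N, ‖v s‖^2)) * (N:ℝ)⁻¹ :=
          mul_le_mul_of_nonneg_right hkey (by positivity)
    _ = σ*β*(∑ s ∈ Finset.Icc 1 N, ‖v s‖^2) := by
          linear_combination σ*β*(∑ s ∈ Finset.Icc 1 N, ‖v s‖^2) * hN1
    _ ≤ Φ 0 := hsum1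
  have hrw : 1 / Real.sqrt ((N:ℝ)*σ*β) * Real.sqrt (Φ 0)
      = Real.sqrt ((Φ 0)/((N:ℝ)*σ*β)) := by
    rw [one_div, ← Real.sqrt_inv, ← Real.sqrt_mul (inv_nonneg.mpr hNσβ.le), inv_mul_eq_div]
  show ‖(N:ℝ)⁻¹ • S‖ ≤ 1 / Real.sqrt ((N:ℝ)*σ*β) * Real.sqrt (Φ 0)
  rw [hrw]
  exact Real.le_sqrt_of_sq_le hsq
end
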